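/- Let q, r ≥ 2 be coprime, ψ : ℕ → S_{q,r} the order-preserving bijection, and k ≥ 1 an integer. If b ∈ [kqr, (k+1)qr) is a bad point of ψ (meaning Δ^{qr}(b) > Δ_{q,r}(ψ(b))), then b < kqr + (q-1)(r-1)/2, and the defect Δ^{qr}(b) - Δ_{q,r}(ψ(b)) equals 1. -/

import Mathlib

open Finset

private lemma le_fg {P : ℕ → Prop} (inst : DecidablePred P) {m n : ℕ} (hmb : m ≤ n)
    (hm : P m) : m ≤ @Nat.findGreatest P inst n := by
  letI := inst
  exact Nat.le_findGreatest hmb hm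


section Aux

private def Pqr (q r x : ℕ) : Prop := ∃ a c : ℕ, x = a * q + c * r

noncomputable instance instPqrDec (q r : ℕ) : DecidablePred (Pqr q r) := Classical.decPred _

variable {q r : ℕ}

private lemma pqr_iff_closure (x : ℕ) :
    Pqr q r x ↔ x ∈ AddSubmonoid.closure ({q, r} : Set ℕ) := by
  rw [AddSubmonoid.mem_closure_pair]
  constructor
  · rintro ⟨a, c, rfl⟩; exact ⟨a, c, by simp [smul_eq_mul]⟩
  · rintro ⟨a, c, h⟩
    simp only [smul_eq_mul] at h
    exact ⟨a, c, h.symm⟩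

private lemma exists_residue (hr : 2 ≤ r) (hqr : Nat.Coprime q r) (x : ℕ) :
    ∃ a : ℕ, a < r ∧ a * q ≡ x [MOD r] := by
  haveI : NeZero r := ⟨by omega⟩
  have hu : IsUnit (q : ZMod r) := (ZMod.unitOfCoprime q hqr).isUnit
  refine ⟨((x : ZMod r) * (q : ZMod r)⁻¹).val, ZMod.val_lt _, ?_⟩
  rw [← ZMod.natCast_eq_natCast_iff]
  push_cast
  rw [ZMod.natCast_val, ZMod.cast_id]
  rw [mul_assoc, ZMod.inv_mul_of_unit _ hu, mul_one]

private lemma pqr_of_modEq_le {a x : ℕ} (h : a * q ≡ x [MOD r]) (hle : a * q ≤ x) :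
    Pqr q r x := by
  obtain ⟨c, hc⟩ := (Nat.modEq_iff_dvd' hle).mp h
  refine ⟨a, c, ?_⟩
  have e : r * c = c * r := by ring
  omega

variable (hq : 2 ≤ q) (hr : 2 ≤ r) (hqr : Nat.Coprime q r)
include hq hr hqr

private lemma frob_facts :
    ¬ Pqr q r (q * r - q - r) ∧ ∀ x, q * r - q - r < x → Pqr q r x := by
  obtain ⟨h1, h2⟩ := frobeniusNumber_pair hqr (by omega) (by omega)
  constructor
  · rw [pqr_iff_closure]; exact h1
  · intro x hx
    by_contra hP
    rw [pqr_iff_closure] at hP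
    exact absurd (h2 hP) (by omega)

private lemma pqr_symm {x : ℕ} (hx : x ≤ q * r - q - r) :
    Pqr q r x ↔ ¬ Pqr q r (q * r - q - r - x) := by
  obtain ⟨hF, -⟩ := frob_facts hq hr hqr
  constructor
  · rintro ⟨a, c, rfl⟩ ⟨a', c', h'⟩
    refine hF ⟨a + a', c + c', ?_⟩
    have e : (a + a') * q + (c + c') * r = (a * q + c * r) + (a' * q + c' * r) := by ring
    omega
  · intro h
    by_contra hPx
    apply h
    obtain ⟨a, ha, hmod⟩ := exists_residue hr hqr x
    have hlt : x < a * q := by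
      rcases lt_or_ge x (a * q) with h' | h'
      · exact h'
      · exact absurd (pqr_of_modEq_le hmod h') hPx
    obtain ⟨m, hm⟩ := (Nat.modEq_iff_dvd' hlt.le).mp hmod.symm
    have hm1 : 1 ≤ m := by
      rcases Nat.eq_zero_or_pos m with rfl | h0
      · simp at hm; omega
      · exact h0
    refine ⟨r - 1 - a, m - 1, ?_⟩
    have hqr' : q + r ≤ q * r := Nat.add_le_mul (by omega) (by omega)
    have hm' : (a : ℤ) * q - x = r * m := by zify [hlt.le] at hm; exact hm
    have key : x + ((r - 1 - a) * q + (m - 1) * r) = q * r - q - r := by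
      zify [show a ≤ r - 1 by omega, show 1 ≤ m from hm1, show 1 ≤ r by omega,
        show q ≤ q * r by nlinarith, show r ≤ q * r - q by omega]
      linear_combination -hm'
    omega

private lemma two_g : 2 * ((q - 1) * (r - 1) / 2) = (q - 1) * (r - 1) := by
  have : 2 ∣ (q - 1) * (r - 1) := by
    rcases Nat.even_or_odd q with hev | hod
    · have h2q : 2 ∣ q := hev.two_dvd
      have h2r : ¬ 2 ∣ r := by
        intro h2r
        have hg : Nat.gcd q r = 1 := hqr
        have := Nat.dvd_gcd h2q h2r
        omega
      exact Dvd.dvd.mul_left (by omega : 2 ∣ r - 1) _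
    · obtain ⟨m, hm⟩ := hod
      exact Dvd.dvd.mul_right (by omega : 2 ∣ q - 1) _
  omega

private lemma Fg : q * r - q - r + 1 = (q - 1) * (r - 1) := by
  have hqr' : q + r ≤ q * r := Nat.add_le_mul (by omega) (by omega)
  zify [show 1 ≤ q by omega, show 1 ≤ r by omega, show q ≤ q * r by nlinarith,
    show r ≤ q * r - q by omega]
  ring

private lemma count_small :
    ((Finset.range (q * r - q - r + 1)).filter (fun x => Pqr q r x)).card
      = (q - 1) * (r - 1) / 2 := by
  set F := q * r - q - r with hF
  have hsplit := Finset.card_filter_add_card_filter_not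
    (s := Finset.range (F + 1)) (p := fun x => Pqr q r x)
  rw [Finset.card_range] at hsplit
  have hcard : ((Finset.range (F + 1)).filter (fun x => Pqr q r x)).card
      = ((Finset.range (F + 1)).filter (fun x => ¬ Pqr q r x)).card := by
    apply Finset.card_nbij' (fun x => F - x) (fun x => F - x)
    · intro x hx
      simp only [Finset.mem_coe, Finset.mem_filter, Finset.mem_range] at hx ⊢
      exact ⟨by omega, (pqr_symm hq hr hqr (by omega)).mp hx.2⟩
    · intro x hx
      simp only [Finset.mem_coe, Finset.mem_filter, Finset.mem_range] at hx ⊢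
      refine ⟨by omega, ?_⟩
      have h := pqr_symm hq hr hqr (show F - x ≤ F by omega)
      rw [show F - (F - x) = x by omega] at h
      exact h.mpr hx.2
    · intro x hx
      simp only [Finset.mem_coe, Finset.mem_filter, Finset.mem_range] at hx ⊢
      omega
    · intro x hx
      simp only [Finset.mem_coe, Finset.mem_filter, Finset.mem_range] at hx ⊢
      omega
  have h2g := two_g hq hr hqr
  have hFg := Fg hq hr hqr
  omega

private lemma count_big {M : ℕ} (hM : (q - 1) * (r - 1) ≤ M) :
    ((Finset.range M).filter (fun x => Pqr q r x)).card
      = M - (q - 1) * (r - 1) / 2 := by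
  have hFg := Fg hq hr hqr
  have h2g := two_g hq hr hqr
  set F := q * r - q - r with hFdef
  have hrange : Finset.range M = Finset.range (F + 1) ∪ Finset.Ico (F + 1) M := by
    rw [Finset.range_eq_Ico, Finset.range_eq_Ico, Finset.Ico_union_Ico_eq_Ico (by omega) (by omega)]
  rw [hrange, Finset.filter_union]
  have hbig : (Finset.Ico (F + 1) M).filter (fun x => Pqr q r x) = Finset.Ico (F + 1) M := by
    apply Finset.filter_true_of_mem
    intro x hx
    rw [Finset.mem_Ico] at hx
    exact (frob_facts hq hr hqr).2 x (by omega)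
  rw [hbig, Finset.card_union_of_disjoint, count_small hq hr hqr, Nat.card_Ico]
  · omega
  · refine Finset.disjoint_left.mpr ?_
    intro x hx hx'
    rw [Finset.mem_filter, Finset.mem_range] at hx
    rw [Finset.mem_Ico] at hx'
    omega

private lemma psi_eq {ψ : ℕ → ℕ} (hmono : StrictMono ψ)
    (hrange : Set.range ψ = {n : ℕ | ∃ a b : ℕ, n = a * q + b * r})
    {n : ℕ} (hn : (q - 1) * (r - 1) ≤ n) :
    ψ n = n + (q - 1) * (r - 1) / 2 := by
  have hPrange : ∀ m, Pqr q r (ψ m) := by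
    intro m
    have h : ψ m ∈ Set.range ψ := ⟨m, rfl⟩
    rw [hrange] at h
    exact h
  have hcount : ((Finset.range (ψ n)).filter (fun x => Pqr q r x)).card = n := by
    have himg : (Finset.range (ψ n)).filter (fun x => Pqr q r x)
        = (Finset.range n).image ψ := by
      ext x
      simp only [Finset.mem_filter, Finset.mem_range, Finset.mem_image]
      constructor
      · rintro ⟨hlt, hP⟩
        have hx : x ∈ Set.range ψ := by rw [hrange]; exact hP
        obtain ⟨m, rfl⟩ := hx
        exact ⟨m, hmono.lt_iff_lt.mp hlt, rfl⟩
      · rintro ⟨m, hm, rfl⟩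
        exact ⟨hmono hm, hPrange m⟩
    rw [himg, Finset.card_image_of_injective _ hmono.injective, Finset.card_range]
  have hge : n ≤ ψ n := hmono.le_apply
  have hbig := count_big hq hr hqr (M := ψ n) (by omega)
  have h2g := two_g hq hr hqr
  omega

end Aux

/-- `Δ_{q,r}(x) = 1 + max{k : x - k*q*r ∈ S_{q,r}}` for `x ∈ S_{q,r}`. -/
noncomputable def Dqr (q r x : ℕ) : ℕ :=
  1 + @Nat.findGreatest
    (fun k => ∃ a c : ℕ, x = a * q + c * r + k * (q * r)) (Classical.decPred _) x

/-- A bad point `b ∈ [kqr, (k+1)qr)` of the order-preserving bijection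
`ψ : ℕ → S_{q,r}` satisfies `b < kqr + (q-1)(r-1)/2` and has defect `1`. -/
theorem bad_point_location_and_defect (q r : ℕ) (hq : 2 ≤ q) (hr : 2 ≤ r)
    (hqr : Nat.Coprime q r) (ψ : ℕ → ℕ) (hmono : StrictMono ψ)
    (hrange : Set.range ψ = {n : ℕ | ∃ a b : ℕ, n = a * q + b * r})
    (k : ℕ) (hk : 1 ≤ k) (b : ℕ) (hb1 : k * (q * r) ≤ b)
    (hb2 : b < (k + 1) * (q * r))
    (hbad : Dqr q r (ψ b) < 1 + b / (q * r)) :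
    b < k * (q * r) + (q - 1) * (r - 1) / 2 ∧
      1 + b / (q * r) = Dqr q r (ψ b) + 1 := by
  obtain ⟨k', rfl⟩ : ∃ k', k = k' + 1 := ⟨k - 1, by omega⟩
  have hqr' : q + r ≤ q * r := Nat.add_le_mul (by omega) (by omega)
  have hFg := Fg hq hr hqr
  have h2g := two_g hq hr hqr
  set g := (q - 1) * (r - 1) / 2 with hg
  set F := q * r - q - r with hF
  have e1 : (k' + 1) * (q * r) = k' * (q * r) + q * r := by ring
  have e2 : (k' + 1 + 1) * (q * r) = k' * (q * r) + q * r + q * r := by ring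
  have hk'le : k' ≤ k' * (q * r) := Nat.le_mul_of_pos_right _ (by omega)
  -- ψ b = b + g
  have hpsi : ψ b = b + g := psi_eq hq hr hqr hmono hrange (by omega)
  set x := ψ b with hx
  have hdiv : b / (q * r) = k' + 1 := Nat.div_eq_of_lt_le hb1 hb2
  rw [hdiv] at hbad
  set N := @Nat.findGreatest
    (fun j => ∃ a c : ℕ, x = a * q + c * r + j * (q * r)) (Classical.decPred _) x with hN
  have hDqr : Dqr q r x = 1 + N := rfl
  rw [hDqr] at hbad
  have hNk : N < k' + 1 := by omega
  have hxlarge : (k' + 1) * (q * r) + g ≤ x := by omega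
  -- predicate holds at k'
  have hA : N = k' := by
    have hPbig : Pqr q r (x - k' * (q * r)) :=
      (frob_facts hq hr hqr).2 _ (by omega)
    obtain ⟨a, c, hac⟩ := hPbig
    have hpred : ∃ a c : ℕ, x = a * q + c * r + k' * (q * r) := ⟨a, c, by omega⟩
    have hge : k' ≤ N := le_fg (Classical.decPred _) (by omega) hpred
    omega
  constructor
  · -- predicate fails at k' + 1
    have hfail : ¬ ∃ a c : ℕ, x = a * q + c * r + (k' + 1) * (q * r) := by
      intro hpred
      have hge : k' + 1 ≤ N := le_fg (Classical.decPred _) (by omega) hpred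
      omega
    have hnotP : ¬ Pqr q r (x - (k' + 1) * (q * r)) := by
      rintro ⟨a, c, hac⟩
      exact hfail ⟨a, c, by omega⟩
    have hle : x - (k' + 1) * (q * r) ≤ F := by
      by_contra hcon
      exact hnotP ((frob_facts hq hr hqr).2 _ (by omega))
    omega
  · rw [hdiv, hDqr]; omega
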